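/- Let S be a numerical semigroup with conductor c(S) > m(S), and let S' = S \ {a} be a child of S obtained by removing a right primitive element a. Then the set of primitive elements P' of S' satisfies P' = P \ {a} or P' = (P \ {a}) ∪ {a+m}, where P is the set of primitive elements of S and m the multiplicity of S. Consequently e(S) − 1 ≤ e(S') ≤ e(S). -/

import Mathlib

/-- A numerical semigroup: a cofinite submonoid of ℕ. -/
def IsNumericalSemigroup (S : Set ℕ) : Prop :=
  0 ∈ S ∧ (∀ a ∈ S, ∀ b ∈ S, a + b ∈ S) ∧ Sᶜ.Finite

/-- A primitive element: a nonzero element of `S` not a sum of two nonzero elements of `S`. -/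
def IsPrimitive (S : Set ℕ) (a : ℕ) : Prop :=
  a ∈ S ∧ a ≠ 0 ∧ ∀ x ∈ S, ∀ y ∈ S, x ≠ 0 → y ≠ 0 → x + y ≠ a

/-- Frobenius number: the largest gap (as a natural number; `0` for `S = ℕ`). -/
noncomputable def frob (S : Set ℕ) : ℕ := sSup Sᶜ

/-- Conductor `c = F + 1`. -/
noncomputable def nsCond (S : Set ℕ) : ℕ := frob S + 1

/-- Multiplicity: least nonzero element. -/
noncomputable def mult (S : Set ℕ) : ℕ := sInf {n | n ∈ S ∧ n ≠ 0}

/-- Genus: number of gaps. -/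
noncomputable def genus (S : Set ℕ) : ℕ := Sᶜ.ncard

/-- Left part `L(S) = {s ∈ S | s < F(S)}`. -/
def leftPart (S : Set ℕ) : Set ℕ := {s | s ∈ S ∧ s < frob S}

/-- The set of primitive elements. -/
def prims (S : Set ℕ) : Set ℕ := {a | IsPrimitive S a}

/-- Embedding dimension: number of primitive elements. -/
noncomputable def edim (S : Set ℕ) : ℕ := (prims S).ncard

/-- Number of left primitive elements. -/
noncomputable def eleft (S : Set ℕ) : ℕ := (prims S ∩ leftPart S).ncard

/-- Right primitive: primitive and greater than the Frobenius number. -/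
def IsRightPrimitive (S : Set ℕ) (a : ℕ) : Prop := IsPrimitive S a ∧ frob S < a

/-- Child in the tree of numerical semigroups. -/
def IsChild (S S' : Set ℕ) : Prop := ∃ a, IsRightPrimitive S a ∧ S' = S \ {a}

/-- Descendant (possibly equal): reachable by removing right primitive elements. -/
def IsDescendant (S T : Set ℕ) : Prop := Relation.ReflTransGen IsChild S T

/-- Wilf's conjecture for `S`. -/
def Wilf (S : Set ℕ) : Prop := nsCond S ≤ edim S * (leftPart S).ncard

/-- The ordinary semigroup `O_m = {0} ∪ (m + ℕ)`. -/
def ordinary (m : ℕ) : Set ℕ := {0} ∪ {n | m ≤ n}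

lemma mem_of_frob_lt {S : Set ℕ} (hS : IsNumericalSemigroup S) {n : ℕ}
    (h : frob S < n) : n ∈ S := by
  by_contra hn
  exact absurd (le_csSup hS.2.2.bddAbove hn) (not_le.mpr h)

lemma mult_spec {S : Set ℕ} (hS : IsNumericalSemigroup S) :
    mult S ∈ S ∧ mult S ≠ 0 := by
  have : frob S + 1 ∈ {n | n ∈ S ∧ n ≠ 0} :=
    ⟨mem_of_frob_lt hS (Nat.lt_succ_self _), Nat.succ_ne_zero _⟩
  exact Nat.sInf_mem ⟨_, this⟩

lemma mult_le {S : Set ℕ} {n : ℕ} (hn : n ∈ S) (h0 : n ≠ 0) : mult S ≤ n :=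
  Nat.sInf_le ⟨hn, h0⟩

lemma prims_bdd {S : Set ℕ} (hS : IsNumericalSemigroup S) :
    prims S ⊆ Set.Iic (frob S + mult S) := by
  intro b hb
  by_contra hbig
  simp only [Set.mem_Iic, not_le] at hbig
  have hm := mult_spec hS
  have hbm : mult S < b := lt_of_le_of_lt (Nat.le_add_left _ _) hbig
  have h1 : b - mult S ∈ S := mem_of_frob_lt hS (by omega)
  exact hb.2.2 (mult S) hm.1 (b - mult S) h1 hm.2 (by omega) (by omega)

lemma prims_finite {S : Set ℕ} (hS : IsNumericalSemigroup S) :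
    (prims S).Finite :=
  (Set.finite_Iic _).subset (prims_bdd hS)

theorem stmt5 (S : Set ℕ) (hS : IsNumericalSemigroup S) (hc : mult S < nsCond S)
    (a : ℕ) (ha : IsRightPrimitive S a) :
    (prims (S \ {a}) = prims S \ {a} ∨
        prims (S \ {a}) = (prims S \ {a}) ∪ {a + mult S}) ∧
      edim S - 1 ≤ edim (S \ {a}) ∧ edim (S \ {a}) ≤ edim S := by
  have hm := mult_spec hS
  have hmF : mult S ≤ frob S := by
    simpa [nsCond, Nat.lt_succ_iff] using hc
  have hma : mult S < a := lt_of_le_of_lt hmF ha.2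
  -- lower inclusion
  have hsub1 : prims S \ {a} ⊆ prims (S \ {a}) := by
    rintro b ⟨hb, hba⟩
    simp only [Set.mem_singleton_iff] at hba
    exact ⟨⟨hb.1, hba⟩, hb.2.1, fun x hx y hy hx0 hy0 =>
      hb.2.2 x hx.1 y hy.1 hx0 hy0⟩
  -- upper inclusion
  have hsub2 : prims (S \ {a}) ⊆ (prims S \ {a}) ∪ {a + mult S} := by
    intro b hb
    by_cases hbp : b ∈ prims S \ {a}
    · exact Or.inl hbp
    right
    have hba : b ≠ a := hb.1.2
    have hbnp : b ∉ prims S := fun h => hbp ⟨h, hba⟩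
    have hbS : b ∈ S := hb.1.1
    obtain ⟨x, hx, y, hy, hx0, hy0, hxy⟩ : ∃ x ∈ S, ∃ y ∈ S, x ≠ 0 ∧ y ≠ 0 ∧ x + y = b := by
      by_contra h
      push_neg at h
      exact hbnp ⟨hbS, hb.2.1, fun x hx y hy hx0 hy0 hxy =>
        (h x hx y hy hx0 hy0) hxy⟩
    -- one of x, y equals a
    have key : ∀ u v : ℕ, u ∈ S → v ∈ S → u ≠ 0 → v ≠ 0 → u + v = b → u = a ∨ v = a := by
      intro u v hu hv hu0 hv0 huv
      by_contra h
      push_neg at h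
      exact hb.2.2 u ⟨hu, h.1⟩ v ⟨hv, h.2⟩ hu0 hv0 huv
    -- so b = a + v for some v ∈ S, v ≠ 0
    obtain ⟨v, hv, hv0, hav⟩ : ∃ v ∈ S, v ≠ 0 ∧ a + v = b := by
      rcases key x y hx hy hx0 hy0 hxy with h | h
      · exact ⟨y, hy, hy0, by omega⟩
      · exact ⟨x, hx, hx0, by omega⟩
    have hmv : mult S ≤ v := mult_le hv hv0
    rcases eq_or_lt_of_le hmv with h | h
    · simp [Set.mem_singleton_iff, ← hav, ← h]
    · exfalso
      have hFa : frob S < a := ha.2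
      have h1 : a + (v - mult S) ∈ S := mem_of_frob_lt hS (by omega)
      exact hb.2.2 (a + (v - mult S)) ⟨h1, by simp; omega⟩ (mult S)
        ⟨hm.1, by simp; omega⟩ (by omega) hm.2 (by omega)
  have hPfin := prims_finite hS
  have hP'fin : (prims (S \ {a})).Finite :=
    (hPfin.diff.union (Set.finite_singleton _)).subset hsub2
  have haP : a ∈ prims S := ha.1
  have hcard : (prims S \ {a}).ncard = edim S - 1 :=
    Set.ncard_diff_singleton_of_mem haP
  have hpos : 1 ≤ edim S := Set.ncard_pos hPfin |>.mpr ⟨a, haP⟩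
  refine ⟨?_, ?_, ?_⟩
  · by_cases ham : a + mult S ∈ prims (S \ {a})
    · right
      refine Set.Subset.antisymm hsub2 (Set.union_subset hsub1 ?_)
      simpa using ham
    · left
      refine Set.Subset.antisymm ?_ hsub1
      intro b hb
      rcases hsub2 hb with h | h
      · exact h
      · simp only [Set.mem_singleton_iff] at h
        exact absurd (h ▸ hb) ham
  · calc edim S - 1 = (prims S \ {a}).ncard := hcard.symm
      _ ≤ edim (S \ {a}) := Set.ncard_le_ncard hsub1 hP'fin
  · calc edim (S \ {a}) ≤ ((prims S \ {a}) ∪ {a + mult S}).ncard :=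
        Set.ncard_le_ncard hsub2 (hPfin.diff.union (Set.finite_singleton _))
      _ ≤ (prims S \ {a}).ncard + ({a + mult S} : Set ℕ).ncard := Set.ncard_union_le _ _
      _ ≤ edim S := by simp [hcard]; omega
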